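/- arXiv:2006.04698 — 4 statements merged into one kernel-verified Lean document; each statement's English description precedes it below -/
import Mathlib

section
/- Let L be a convex body in ℝⁿ containing the origin in its interior, and let {L_t}, t ∈ [-1,1], be the Steiner shadow system of L along a unit direction e (so that L_1 = L, L_{-1} is the reflection of L in the hyperplane e^⊥, and L_0 is the Steiner symmetral of L with respect to e^⊥). Fix t₀ ∈ [-1,1]. Then the function (t,v) ↦ (ρ_{L_t}(v) − ρ_{L_{t₀}}(v))/(t − t₀) is uniformly bounded on ([-1,1] \ {t₀}) × S^{n−1}, where ρ denotes the radial function. -/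
open Set

noncomputable def radialFn {n : ℕ} (M : Set (EuclideanSpace ℝ (Fin n)))
    (v : EuclideanSpace ℝ (Fin n)) : ℝ :=
  sSup {r : ℝ | 0 ≤ r ∧ r • v ∈ M}

set_option maxHeartbeats 1000000 in
/-- For the Steiner shadow system `L_t` of a convex body `L` (origin in the
interior) along a unit direction `e`, the difference quotients of the radial functions at
`t₀ ∈ [-1,1]` are uniformly bounded on `([-1,1] \ {t₀}) × S^{n-1}`. -/
theorem steiner_radial_difference_quotient_bounded {n : ℕ}
    (e : EuclideanSpace ℝ (Fin n)) (he : ‖e‖ = 1)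
    (L : Set (EuclideanSpace ℝ (Fin n)))
    (hcomp : IsCompact L) (hconv : Convex ℝ L)
    (h0 : (0 : EuclideanSpace ℝ (Fin n)) ∈ interior L)
    (P : Set (EuclideanSpace ℝ (Fin n)))
    (hP : P = (fun x => x - (inner ℝ x e : ℝ) • e) '' L)
    (z w u : EuclideanSpace ℝ (Fin n) → ℝ)
    (hz : ConvexOn ℝ P z) (hw : ConcaveOn ℝ P w) (hzw : ∀ x ∈ P, z x ≤ w x)
    (hu : ∀ x, u x = (z x + w x) / 2)
    (Lt : ℝ → Set (EuclideanSpace ℝ (Fin n)))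
    (hLt : ∀ t : ℝ, Lt t =
      {x : EuclideanSpace ℝ (Fin n) | (x - (inner ℝ x e : ℝ) • e) ∈ P ∧
        z (x - (inner ℝ x e : ℝ) • e) - (1 - t) * u (x - (inner ℝ x e : ℝ) • e) ≤ (inner ℝ x e : ℝ) ∧
        (inner ℝ x e : ℝ) ≤ w (x - (inner ℝ x e : ℝ) • e) - (1 - t) * u (x - (inner ℝ x e : ℝ) • e)})
    (hL1 : Lt 1 = L)
    (hbody : ∀ t ∈ Icc (-1 : ℝ) 1, (0 : EuclideanSpace ℝ (Fin n)) ∈ interior (Lt t))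
    (t₀ : ℝ) (ht₀ : t₀ ∈ Icc (-1 : ℝ) 1) :
    ∃ C : ℝ, ∀ t ∈ Icc (-1 : ℝ) 1, t ≠ t₀ →
      ∀ v : EuclideanSpace ℝ (Fin n), ‖v‖ = 1 →
        |(radialFn (Lt t) v - radialFn (Lt t₀) v) / (t - t₀)| ≤ C := by
  classical
  have hee : (inner ℝ e e : ℝ) = 1 := by
    rw [real_inner_self_eq_norm_sq, he]; norm_num
  -- projection helpers
  have hprinner : ∀ x : EuclideanSpace ℝ (Fin n),
      (inner ℝ (x - (inner ℝ x e : ℝ) • e) e : ℝ) = 0 := by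
    intro x
    rw [inner_sub_left, real_inner_smul_left, hee]; ring
  have hprfix : ∀ x : EuclideanSpace ℝ (Fin n), (inner ℝ x e : ℝ) = 0 →
      x - (inner ℝ x e : ℝ) • e = x := by
    intro x hx; rw [hx]; simp
  have hprshift : ∀ (x : EuclideanSpace ℝ (Fin n)) (c : ℝ),
      (x - c • e) - (inner ℝ (x - c • e) e : ℝ) • e = x - (inner ℝ x e : ℝ) • e := by
    intro x c
    rw [inner_sub_left, real_inner_smul_left, hee]
    module
  have hpradd : ∀ (x : EuclideanSpace ℝ (Fin n)) (c : ℝ),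
      (x + c • e) - (inner ℝ (x + c • e) e : ℝ) • e = x - (inner ℝ x e : ℝ) • e := by
    intro x c
    rw [inner_add_left, real_inner_smul_left, hee]
    module
  have hie : ∀ (x : EuclideanSpace ℝ (Fin n)) (c : ℝ),
      (inner ℝ (x - c • e) e : ℝ) = (inner ℝ x e : ℝ) - c := by
    intro x c; rw [inner_sub_left, real_inner_smul_left, hee]; ring
  have hiadd : ∀ (x : EuclideanSpace ℝ (Fin n)) (c : ℝ),
      (inner ℝ (x + c • e) e : ℝ) = (inner ℝ x e : ℝ) + c := by
    intro x c; rw [inner_add_left, real_inner_smul_left, hee]; ring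
  have hprlin : ∀ (a b : ℝ) (x y : EuclideanSpace ℝ (Fin n)),
      (a • x + b • y) - (inner ℝ (a • x + b • y) e : ℝ) • e
        = a • (x - (inner ℝ x e : ℝ) • e) + b • (y - (inner ℝ y e : ℝ) • e) := by
    intro a b x y
    rw [inner_add_left, real_inner_smul_left, real_inner_smul_left]
    module
  have hinnerlin : ∀ (a b : ℝ) (x y : EuclideanSpace ℝ (Fin n)),
      (inner ℝ (a • x + b • y) e : ℝ) = a * (inner ℝ x e : ℝ) + b * (inner ℝ y e : ℝ) := by
    intro a b x y; rw [inner_add_left, real_inner_smul_left, real_inner_smul_left]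
  -- convexity of each L_t, t ∈ [-1,1]
  have hconvLt : ∀ s ∈ Icc (-1:ℝ) 1, Convex ℝ (Lt s) := by
    intro s hs
    have h1 : (0:ℝ) ≤ (1+s)/2 := by linarith [hs.1]
    have h2 : (0:ℝ) ≤ (1-s)/2 := by linarith [hs.2]
    have hg : ConvexOn ℝ P (fun p => z p - (1-s) * u p) := by
      have heq : (fun p => z p - (1-s) * u p)
          = (((1+s)/2) • z - ((1-s)/2) • w) := by
        funext p
        simp only [Pi.sub_apply, Pi.smul_apply, smul_eq_mul, hu]
        ring
      rw [heq]
      exact (hz.smul h1).sub (hw.smul h2)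
    have hh : ConcaveOn ℝ P (fun p => w p - (1-s) * u p) := by
      have heq : (fun p => w p - (1-s) * u p)
          = (((1+s)/2) • w - ((1-s)/2) • z) := by
        funext p
        simp only [Pi.sub_apply, Pi.smul_apply, smul_eq_mul, hu]
        ring
      rw [heq]
      exact (hw.smul h1).sub (hz.smul h2)
    intro x hx y hy a b ha hb hab
    rw [hLt] at hx hy ⊢
    simp only [Set.mem_setOf_eq] at hx hy ⊢
    obtain ⟨hxP, hxl, hxr⟩ := hx
    obtain ⟨hyP, hyl, hyr⟩ := hy
    refine ⟨?_, ?_, ?_⟩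
    · rw [hprlin]
      exact hz.1 hxP hyP ha hb hab
    · rw [hprlin, hinnerlin]
      have hG := hg.2 hxP hyP ha hb hab
      simp only [smul_eq_mul] at hG
      nlinarith [mul_le_mul_of_nonneg_left hxl ha, mul_le_mul_of_nonneg_left hyl hb]
    · rw [hprlin, hinnerlin]
      have hG := hh.2 hxP hyP ha hb hab
      simp only [smul_eq_mul] at hG
      nlinarith [mul_le_mul_of_nonneg_left hxr ha, mul_le_mul_of_nonneg_left hyr hb]
  -- a common small ball
  obtain ⟨r1, hr1, hb1⟩ := Metric.isOpen_iff.mp isOpen_interior 0 (hbody 1 (by norm_num))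
  obtain ⟨r2, hr2, hb2⟩ := Metric.isOpen_iff.mp isOpen_interior 0 (hbody (-1) (by norm_num))
  set rr := min r1 r2 with hrrdef
  have hrr : 0 < rr := lt_min hr1 hr2
  have hballs : ∀ t ∈ Icc (-1:ℝ) 1,
      Metric.ball (0 : EuclideanSpace ℝ (Fin n)) rr ⊆ Lt t := by
    intro t ht x hx
    have hx1 : x ∈ Lt 1 :=
      interior_subset (hb1 (Metric.ball_subset_ball (min_le_left _ _) hx))
    have hxm : x ∈ Lt (-1) :=
      interior_subset (hb2 (Metric.ball_subset_ball (min_le_right _ _) hx))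
    rw [hLt] at hx1 hxm ⊢
    simp only [Set.mem_setOf_eq] at hx1 hxm ⊢
    obtain ⟨hP1, hl1, hw1⟩ := hx1
    obtain ⟨_, hlm, hwm⟩ := hxm
    refine ⟨hP1, ?_, ?_⟩
    · rcases le_or_gt 0 (u (x - (inner ℝ x e : ℝ) • e)) with hu0 | hu0
      · have := mul_nonneg (show (0:ℝ) ≤ 1 - t by linarith [ht.2]) hu0
        linarith
      · have h2u : (2:ℝ) * u (x - (inner ℝ x e : ℝ) • e)
            ≤ (1 - t) * u (x - (inner ℝ x e : ℝ) • e) :=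
          mul_le_mul_of_nonpos_right (show (1:ℝ) - t ≤ 2 by linarith [ht.1]) hu0.le
        linarith
    · rcases le_or_gt 0 (u (x - (inner ℝ x e : ℝ) • e)) with hu0 | hu0
      · have h2u : (1 - t) * u (x - (inner ℝ x e : ℝ) • e)
            ≤ 2 * u (x - (inner ℝ x e : ℝ) • e) :=
          mul_le_mul_of_nonneg_right (show (1:ℝ) - t ≤ 2 by linarith [ht.1]) hu0
        linarith
      · have := mul_nonpos_of_nonneg_of_nonpos
          (show (0:ℝ) ≤ 1 - t by linarith [ht.2]) hu0.le
        linarith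
  -- outer bounds
  obtain ⟨R0, hR0⟩ := isBounded_iff_forall_norm_le.mp hcomp.isBounded
  set R₀ := max R0 1 with hR₀def
  have hR₀pos : (0:ℝ) < R₀ := lt_of_lt_of_le one_pos (le_max_right _ _)
  have hLn : ∀ x ∈ L, ‖x‖ ≤ R₀ := fun x hx => le_trans (hR0 x hx) (le_max_left _ _)
  have hPker : ∀ p ∈ P, (inner ℝ p e : ℝ) = 0 := by
    intro p hp
    rw [hP] at hp
    obtain ⟨x0, _, rfl⟩ := hp
    exact hprinner x0
  have hPn : ∀ p ∈ P, ‖p‖ ≤ 2 * R₀ := by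
    intro p hp
    rw [hP] at hp
    obtain ⟨x0, hx0, rfl⟩ := hp
    have h1 : ‖x0‖ ≤ R₀ := hLn x0 hx0
    have h2 : ‖(inner ℝ x0 e : ℝ) • e‖ ≤ R₀ := by
      rw [norm_smul, he, mul_one, Real.norm_eq_abs]
      exact le_trans (abs_real_inner_le_norm x0 e) (by rw [he, mul_one]; exact h1)
    calc ‖x0 - (inner ℝ x0 e : ℝ) • e‖ ≤ ‖x0‖ + ‖(inner ℝ x0 e : ℝ) • e‖ := norm_sub_le _ _
      _ ≤ 2 * R₀ := by linarith
  have hLmem : ∀ p ∈ P, ∀ c : ℝ, z p ≤ c → c ≤ w p → p + c • e ∈ L := by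
    intro p hp c h1 h2
    rw [← hL1, hLt]
    simp only [Set.mem_setOf_eq]
    have hpe : (inner ℝ p e : ℝ) = 0 := hPker p hp
    have hq : (p + c • e) - (inner ℝ (p + c • e) e : ℝ) • e = p := by
      rw [hpradd]; exact hprfix p hpe
    have hqe : (inner ℝ (p + c • e) e : ℝ) = c := by
      rw [hiadd, hpe, zero_add]
    rw [hq, hqe]
    exact ⟨hp, by linarith, by linarith⟩
  have hPz : ∀ p ∈ P, |z p| ≤ 3 * R₀ := by
    intro p hp
    have hq : p + z p • e ∈ L := hLmem p hp (z p) le_rfl (hzw p hp)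
    have h1 : ‖p + z p • e‖ ≤ R₀ := hLn _ hq
    have h2 : ‖p‖ ≤ 2 * R₀ := hPn p hp
    have h3 : |z p| = ‖(p + z p • e) - p‖ := by
      rw [show (p + z p • e) - p = z p • e by abel, norm_smul, he, mul_one,
        Real.norm_eq_abs]
    rw [h3]
    calc ‖(p + z p • e) - p‖ ≤ ‖p + z p • e‖ + ‖p‖ := norm_sub_le _ _
      _ ≤ 3 * R₀ := by linarith
  have hPw : ∀ p ∈ P, |w p| ≤ 3 * R₀ := by
    intro p hp
    have hq : p + w p • e ∈ L := hLmem p hp (w p) (hzw p hp) le_rfl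
    have h1 : ‖p + w p • e‖ ≤ R₀ := hLn _ hq
    have h2 : ‖p‖ ≤ 2 * R₀ := hPn p hp
    have h3 : |w p| = ‖(p + w p • e) - p‖ := by
      rw [show (p + w p • e) - p = w p • e by abel, norm_smul, he, mul_one,
        Real.norm_eq_abs]
    rw [h3]
    calc ‖(p + w p • e) - p‖ ≤ ‖p + w p • e‖ + ‖p‖ := norm_sub_le _ _
      _ ≤ 3 * R₀ := by linarith
  have hPu : ∀ p ∈ P, |u p| ≤ 3 * R₀ := by
    intro p hp
    rw [hu]
    have h1 := hPz p hp
    have h2 := hPw p hp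
    rw [abs_le] at h1 h2 ⊢
    constructor <;> [linarith [h1.1, h2.1]; linarith [h1.2, h2.2]]
  set R := 11 * R₀ with hRdef
  have hRpos : 0 < R := by positivity
  have hRt : ∀ t ∈ Icc (-1:ℝ) 1, ∀ x ∈ Lt t, ‖x‖ ≤ R := by
    intro t ht x hx
    rw [hLt] at hx
    simp only [Set.mem_setOf_eq] at hx
    obtain ⟨hxP, hxl, hxr⟩ := hx
    have hzb := hPz _ hxP
    have hwb := hPw _ hxP
    have hub := hPu _ hxP
    have habs1t : |1 - t| ≤ 2 := by
      rw [abs_le]; constructor <;> linarith [ht.1, ht.2]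
    have hub2 : |(1 - t) * u (x - (inner ℝ x e : ℝ) • e)| ≤ 6 * R₀ := by
      rw [abs_mul]
      calc |1 - t| * |u (x - (inner ℝ x e : ℝ) • e)| ≤ 2 * (3 * R₀) := by
            apply mul_le_mul habs1t hub (abs_nonneg _) (by norm_num)
        _ = 6 * R₀ := by ring
    have hy : |(inner ℝ x e : ℝ)| ≤ 9 * R₀ := by
      rw [abs_le] at hzb hwb hub2 ⊢
      constructor
      · linarith [hzb.1, hub2.2]
      · linarith [hwb.2, hub2.1]
    have hxd : x = (x - (inner ℝ x e : ℝ) • e) + (inner ℝ x e : ℝ) • e := by abel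
    calc ‖x‖ = ‖(x - (inner ℝ x e : ℝ) • e) + (inner ℝ x e : ℝ) • e‖ := by rw [← hxd]
      _ ≤ ‖x - (inner ℝ x e : ℝ) • e‖ + ‖(inner ℝ x e : ℝ) • e‖ := norm_add_le _ _
      _ ≤ 2 * R₀ + 9 * R₀ := by
          gcongr
          · exact hPn _ hxP
          · rw [norm_smul, he, mul_one, Real.norm_eq_abs]; exact hy
      _ ≤ R := by rw [hRdef]; linarith
  -- the shear map
  have hshear : ∀ t s : ℝ, ∀ x ∈ Lt t,
      x - ((t - s) * u (x - (inner ℝ x e : ℝ) • e)) • e ∈ Lt s := by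
    intro t s x hx
    rw [hLt] at hx ⊢
    simp only [Set.mem_setOf_eq] at hx ⊢
    obtain ⟨h1, h2, h3⟩ := hx
    rw [hprshift, hie]
    exact ⟨h1, by linarith, by linarith⟩
  -- radial function framework
  have hSne : ∀ t ∈ Icc (-1:ℝ) 1, ∀ v : EuclideanSpace ℝ (Fin n),
      (0:ℝ) ∈ {ρ : ℝ | 0 ≤ ρ ∧ ρ • v ∈ Lt t} := by
    intro t ht v
    exact ⟨le_refl 0, by rw [zero_smul]; exact hballs t ht (Metric.mem_ball_self hrr)⟩
  have hSub : ∀ t ∈ Icc (-1:ℝ) 1, ∀ v : EuclideanSpace ℝ (Fin n), ‖v‖ = 1 →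
      ∀ ρ ∈ {ρ : ℝ | 0 ≤ ρ ∧ ρ • v ∈ Lt t}, ρ ≤ R := by
    intro t ht v hv ρ hρ
    obtain ⟨hρ0, hρm⟩ := hρ
    have := hRt t ht _ hρm
    rwa [norm_smul, hv, mul_one, Real.norm_eq_abs, abs_of_nonneg hρ0] at this
  have hSbdd : ∀ t ∈ Icc (-1:ℝ) 1, ∀ v : EuclideanSpace ℝ (Fin n), ‖v‖ = 1 →
      BddAbove {ρ : ℝ | 0 ≤ ρ ∧ ρ • v ∈ Lt t} :=
    fun t ht v hv => ⟨R, fun ρ hρ => hSub t ht v hv ρ hρ⟩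
  have hρub : ∀ t ∈ Icc (-1:ℝ) 1, ∀ v : EuclideanSpace ℝ (Fin n), ‖v‖ = 1 →
      radialFn (Lt t) v ≤ R := by
    intro t ht v hv
    exact csSup_le ⟨0, hSne t ht v⟩ (hSub t ht v hv)
  have hρ0 : ∀ t ∈ Icc (-1:ℝ) 1, ∀ v : EuclideanSpace ℝ (Fin n), ‖v‖ = 1 →
      0 ≤ radialFn (Lt t) v := by
    intro t ht v hv
    exact le_csSup (hSbdd t ht v hv) (hSne t ht v)
  set C := (3 * R₀) / (rr / 2) * R with hCdef
  -- the key one-sided Lipschitz estimate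
  have hkey : ∀ t ∈ Icc (-1:ℝ) 1, ∀ s ∈ Icc (-1:ℝ) 1, t ≠ s →
      ∀ v : EuclideanSpace ℝ (Fin n), ‖v‖ = 1 →
      radialFn (Lt t) v ≤ radialFn (Lt s) v + |t - s| * C := by
    intro t ht s hs hts v hv
    set ε := |t - s| * (3 * R₀) with hεdef
    have hεpos : 0 < ε := by
      apply mul_pos
      · exact abs_pos.mpr (sub_ne_zero.mpr hts)
      · positivity
    set r' := rr / 2 with hr'def
    have hr'pos : 0 < r' := by positivity
    set lam := r' / (r' + ε) with hlamdef
    have hsum : 0 < r' + ε := by positivity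
    have hlampos : 0 < lam := div_pos hr'pos hsum
    have hlamle : lam ≤ 1 := by
      rw [hlamdef, div_le_one hsum]; linarith
    have hcomp1 : 1 - lam = ε / (r' + ε) := by
      rw [hlamdef]; field_simp; ring
    refine csSup_le ⟨0, hSne t ht v⟩ ?_
    intro ρ hρ
    obtain ⟨hρnn, hρmem⟩ := hρ
    set x := ρ • v with hxdef
    set p := x - (inner ℝ x e : ℝ) • e with hpdef
    have hpP : p ∈ P := by
      have := hρmem; rw [hLt] at this
      exact this.1
    set d : EuclideanSpace ℝ (Fin n) := ((t - s) * u p) • e with hddef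
    have hx' : x - d ∈ Lt s := hshear t s x hρmem
    have hdnorm : ‖d‖ ≤ ε := by
      rw [hddef, norm_smul, he, mul_one, Real.norm_eq_abs, abs_mul, hεdef]
      exact mul_le_mul_of_nonneg_left (hPu p hpP) (abs_nonneg _)
    set q : EuclideanSpace ℝ (Fin n) := (r' / ε) • d with hqdef
    have hqnorm : ‖q‖ ≤ r' := by
      rw [hqdef, norm_smul, Real.norm_eq_abs, abs_of_nonneg (by positivity : (0:ℝ) ≤ r'/ε)]
      calc r' / ε * ‖d‖ ≤ r' / ε * ε := by
            apply mul_le_mul_of_nonneg_left hdnorm (by positivity)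
        _ = r' := by field_simp
    have hqmem : q ∈ Lt s := by
      apply hballs s hs
      rw [Metric.mem_ball, dist_zero_right]
      calc ‖q‖ ≤ r' := hqnorm
        _ < rr := by rw [hr'def]; linarith
    have hvec : lam • x = lam • (x - d) + (1 - lam) • q := by
      have hc : (1 - lam) * (r' / ε) = lam := by
        rw [hcomp1, hlamdef]
        field_simp
      rw [hqdef, smul_smul (1 - lam) (r' / ε) d, hc]
      module
    have hmem2 : lam • x ∈ Lt s := by
      rw [hvec]
      exact hconvLt s hs hx' hqmem hlampos.le (by linarith) (by ring)
    have hmemS : lam * ρ ∈ {ρ : ℝ | 0 ≤ ρ ∧ ρ • v ∈ Lt s} := by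
      refine ⟨mul_nonneg hlampos.le hρnn, ?_⟩
      rw [mul_smul]
      exact hmem2
    have hle1 : lam * ρ ≤ radialFn (Lt s) v := le_csSup (hSbdd s hs v hv) hmemS
    have hρle : ρ ≤ (1 / lam) * radialFn (Lt s) v := by
      rw [div_mul_eq_mul_div, le_div_iff₀ hlampos]
      nlinarith [hle1]
    have hinv : 1 / lam = 1 + ε / r' := by
      rw [hlamdef]; field_simp
    have hfin : ρ ≤ radialFn (Lt s) v + (ε / r') * R := by
      have h1 : ρ ≤ (1 + ε / r') * radialFn (Lt s) v := by rw [← hinv]; exact hρle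
      have h2 : (ε / r') * radialFn (Lt s) v ≤ (ε / r') * R :=
        mul_le_mul_of_nonneg_left (hρub s hs v hv) (by positivity)
      nlinarith [hρ0 s hs v hv]
    calc ρ ≤ radialFn (Lt s) v + (ε / r') * R := hfin
      _ = radialFn (Lt s) v + |t - s| * C := by
          rw [hεdef, hr'def, hCdef]; ring
  -- conclude
  refine ⟨C, ?_⟩
  intro t ht htne v hv
  have h1 := hkey t ht t₀ ht₀ htne v hv
  have h2 := hkey t₀ ht₀ t ht (Ne.symm htne) v hv
  rw [abs_sub_comm t₀ t] at h2
  have habs : |radialFn (Lt t) v - radialFn (Lt t₀) v| ≤ |t - t₀| * C := by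
    rw [abs_le]
    constructor
    · linarith
    · linarith
  rw [abs_div]
  rw [div_le_iff₀ (abs_pos.mpr (sub_ne_zero.mpr htne))]
  calc |radialFn (Lt t) v - radialFn (Lt t₀) v| ≤ |t - t₀| * C := habs
    _ = C * |t - t₀| := by ring
end

section
/- Let 0 < a < b and let G : [a,b] → (0,∞) be continuous such that for some antiderivative H of G, the function θ ↦ θG(θ) + nH(θ) is strictly increasing on [a,b]. Then G extends to a continuous function Ḡ : (0,∞) → (0,∞) such that there exists a continuous strictly increasing function F : [0,∞) → ℝ with F(0) = 0 and Ḡ(θ) = d/dθ ( ∫₀¹ r^{n−1} F(rθ) dr ) for all θ ∈ (0,∞). -/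
open Set intervalIntegral

/-- If `G : [a,b] → (0,∞)` is continuous and `θ ↦ θG(θ) + nH(θ)` is strictly
increasing for an antiderivative `H` of `G`, then `G` extends to a continuous positive
function `Ḡ` on `(0,∞)` of the form `Ḡ(θ) = d/dθ ∫₀¹ r^{n-1} F(rθ) dr` for a continuous
strictly increasing `F : [0,∞) → ℝ` with `F(0) = 0`. -/
theorem extension_to_A_class (n : ℕ) (hn : 0 < n) (a b : ℝ) (ha : 0 < a) (hab : a < b)
    (G H : ℝ → ℝ) (hGcont : ContinuousOn G (Icc a b))
    (hGpos : ∀ θ ∈ Icc a b, 0 < G θ)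
    (hH : ∀ θ ∈ Icc a b, HasDerivAt H (G θ) θ)
    (hmono : StrictMonoOn (fun θ => θ * G θ + n * H θ) (Icc a b)) :
    ∃ Gbar : ℝ → ℝ, ContinuousOn Gbar (Ioi 0) ∧ (∀ θ ∈ Ioi (0 : ℝ), 0 < Gbar θ) ∧
      (∀ θ ∈ Icc a b, Gbar θ = G θ) ∧
      ∃ F : ℝ → ℝ, ContinuousOn F (Ici 0) ∧ StrictMonoOn F (Ici 0) ∧ F 0 = 0 ∧
        ∀ θ ∈ Ioi (0 : ℝ),
          HasDerivAt (fun s => ∫ r in (0 : ℝ)..1, r ^ (n - 1) * F (r * s)) (Gbar θ) θ := by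
  obtain ⟨m, rfl⟩ : ∃ m, n = m + 1 := ⟨n - 1, (Nat.succ_pred_eq_of_pos hn).symm⟩
  set n := m + 1 with hn1
  -- the clamped extension of G
  set Gbar : ℝ → ℝ := fun θ => G (min b (max a θ)) with hGbar_def
  have hmem : ∀ θ : ℝ, min b (max a θ) ∈ Icc a b := fun θ =>
    ⟨le_min hab.le (le_max_left _ _), min_le_left _ _⟩
  have hGbar_cont : Continuous Gbar :=
    hGcont.comp_continuous (continuous_const.min (continuous_const.max continuous_id)) hmem
  have hGbar_pos : ∀ θ : ℝ, 0 < Gbar θ := fun θ => hGpos _ (hmem θ)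
  have hGbar_eq : ∀ θ ∈ Icc a b, Gbar θ = G θ := by
    intro θ hθ
    simp only [hGbar_def, max_eq_right hθ.1, min_eq_right hθ.2]
  have hGbar_left : ∀ θ : ℝ, θ ≤ a → Gbar θ = G a := by
    intro θ hθ
    simp only [hGbar_def, max_eq_left hθ, min_eq_right hab.le]
  have hGbar_right : ∀ θ : ℝ, b ≤ θ → Gbar θ = G b := by
    intro θ hθ
    have : max a θ = θ := max_eq_right (hab.le.trans hθ)
    simp only [hGbar_def, this, min_eq_left hθ]
  -- its primitive
  set Ibar : ℝ → ℝ := fun θ => ∫ t in a..θ, Gbar t with hIbar_def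
  have hIbar_deriv : ∀ θ : ℝ, HasDerivAt Ibar (Gbar θ) θ := by
    intro θ
    exact (hGbar_cont.integral_hasStrictDerivAt a θ).hasDerivAt
  have hIbar_cont : Continuous Ibar :=
    continuous_iff_continuousAt.2 fun θ => (hIbar_deriv θ).continuousAt
  have hIbar_left : ∀ θ : ℝ, θ ≤ a → Ibar θ = (θ - a) * G a := by
    intro θ hθ
    have : Ibar θ = ∫ _t in a..θ, G a := by
      apply intervalIntegral.integral_congr
      intro t ht
      rw [uIcc_of_ge hθ] at ht
      exact hGbar_left t ht.2
    rw [this, intervalIntegral.integral_const, smul_eq_mul]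
  have hIbar_right : ∀ θ : ℝ, b ≤ θ → Ibar θ = Ibar b + (θ - b) * G b := by
    intro θ hθ
    have h1 : Ibar b + ∫ t in b..θ, Gbar t = Ibar θ :=
      intervalIntegral.integral_add_adjacent_intervals
        (hGbar_cont.intervalIntegrable a b) (hGbar_cont.intervalIntegrable b θ)
    have h2 : (∫ t in b..θ, Gbar t) = (θ - b) * G b := by
      have : (∫ t in b..θ, Gbar t) = ∫ _t in b..θ, G b := by
        apply intervalIntegral.integral_congr
        intro t ht
        rw [uIcc_of_le hθ] at ht
        exact hGbar_right t ht.1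
      rw [this, intervalIntegral.integral_const, smul_eq_mul]
    rw [← h1, h2]
  -- Ibar = H - H a on [a,b]
  have hIH : ∀ θ ∈ Icc a b, Ibar θ = H θ - H a := by
    have hconst : ∀ x ∈ Icc a b, (Ibar x - H x) = Ibar a - H a := by
      apply constant_of_has_deriv_right_zero
      · exact (hIbar_cont.continuousOn).sub
          (fun x hx => ((hH x hx).continuousAt).continuousWithinAt)
      · intro x hx
        have : HasDerivAt (fun y => Ibar y - H y) (Gbar x - G x) x :=
          (hIbar_deriv x).sub (hH x (Ico_subset_Icc_self hx))
        rw [hGbar_eq x (Ico_subset_Icc_self hx), sub_self] at this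
        exact this.hasDerivWithinAt
    intro θ hθ
    have h0 : Ibar a = 0 := intervalIntegral.integral_same
    have := hconst θ hθ
    rw [h0] at this
    linarith
  -- the function F
  set F : ℝ → ℝ := fun θ => θ * Gbar θ + n * Ibar θ + n * a * G a with hF_def
  have hF_cont : Continuous F := by
    apply Continuous.add
    apply Continuous.add
    · exact continuous_id.mul hGbar_cont
    · exact continuous_const.mul hIbar_cont
    · exact continuous_const
  have hF0 : F 0 = 0 := by
    have h1 : Gbar 0 = G a := hGbar_left 0 ha.le
    have h2 : Ibar 0 = (0 - a) * G a := hIbar_left 0 ha.le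
    simp only [hF_def, h1, h2]
    ring
  -- strict monotonicity
  have hstep1 : ∀ u v : ℝ, u < v → v ≤ a → F u < F v := by
    intro u v huv hva
    have hu : F u = u * G a + n * ((u - a) * G a) + n * a * G a := by
      simp only [hF_def]; rw [hGbar_left u (huv.le.trans hva), hIbar_left u (huv.le.trans hva)]
    have hv : F v = v * G a + n * ((v - a) * G a) + n * a * G a := by
      simp only [hF_def]; rw [hGbar_left v hva, hIbar_left v hva]
    have hGa : 0 < G a := hGpos a ⟨le_rfl, hab.le⟩
    have hnpos : (0:ℝ) < (n:ℝ) + 1 := by positivity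
    nlinarith [mul_pos (sub_pos.2 huv) hGa, mul_pos (mul_pos hnpos (sub_pos.2 huv)) hGa]
  have hstep2 : ∀ u v : ℝ, a ≤ u → u < v → v ≤ b → F u < F v := by
    intro u v hau huv hvb
    have hu : F u = (u * G u + n * H u) + (n * a * G a - n * H a) := by
      simp only [hF_def]; rw [hGbar_eq u ⟨hau, huv.le.trans hvb⟩, hIH u ⟨hau, huv.le.trans hvb⟩]; ring
    have hv : F v = (v * G v + n * H v) + (n * a * G a - n * H a) := by
      simp only [hF_def]; rw [hGbar_eq v ⟨hau.trans huv.le, hvb⟩, hIH v ⟨hau.trans huv.le, hvb⟩]; ring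
    rw [hu, hv]
    have h := hmono ⟨hau, huv.le.trans hvb⟩ ⟨hau.trans huv.le, hvb⟩ huv
    simp only at h
    linarith
  have hstep3 : ∀ u v : ℝ, b ≤ u → u < v → F u < F v := by
    intro u v hbu huv
    have hu : F u = u * G b + n * (Ibar b + (u - b) * G b) + n * a * G a := by
      simp only [hF_def]; rw [hGbar_right u hbu, hIbar_right u hbu]
    have hv : F v = v * G b + n * (Ibar b + (v - b) * G b) + n * a * G a := by
      simp only [hF_def]; rw [hGbar_right v (hbu.trans huv.le), hIbar_right v (hbu.trans huv.le)]
    have hGb : 0 < G b := hGpos b ⟨hab.le, le_rfl⟩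
    have hnpos : (0:ℝ) ≤ (n:ℝ) := by positivity
    nlinarith [mul_pos (sub_pos.2 huv) hGb, mul_nonneg (mul_nonneg hnpos (sub_pos.2 huv).le) hGb.le]
  have hF_mono : StrictMono F := by
    intro x y hxy
    rcases le_or_gt y a with h | h
    · exact hstep1 x y hxy h
    rcases le_or_gt b x with h' | h'
    · exact hstep3 x y h' hxy
    have hay : F a < F y := by
      rcases le_or_gt y b with hyb | hyb
      · exact hstep2 a y le_rfl h hyb
      · exact (hstep2 a b le_rfl hab le_rfl).trans (hstep3 b y le_rfl hyb)
    rcases le_or_gt x a with hxa | hxa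
    · rcases eq_or_lt_of_le hxa with rfl | hxa'
      · exact hay
      · exact (hstep1 x a hxa' le_rfl).trans hay
    · rcases le_or_gt y b with hyb | hyb
      · exact hstep2 x y hxa.le hxy hyb
      · exact (hstep2 x b hxa.le h' le_rfl).trans (hstep3 b y le_rfl hyb)
  -- the key integral identity
  have key : ∀ s : ℝ, (∫ r in (0:ℝ)..1, r ^ (n - 1) * F (r * s)) = Ibar s + a * G a := by
    intro s
    have hderiv : ∀ r ∈ uIcc (0:ℝ) 1,
        HasDerivAt (fun r : ℝ => r ^ n * (Ibar (r * s) + a * G a))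
          (r ^ (n - 1) * F (r * s)) r := by
      intro r _
      have h1 : HasDerivAt (fun r : ℝ => r ^ n) ((n : ℝ) * r ^ (n - 1)) r :=
        hasDerivAt_pow n r
      have h2 : HasDerivAt (fun r : ℝ => Ibar (r * s) + a * G a) (Gbar (r * s) * s) r := by
        have := (hIbar_deriv (r * s)).comp r (hasDerivAt_mul_const s)
        exact this.add_const _
      have : HasDerivAt (fun r : ℝ => r ^ n * (Ibar (r * s) + a * G a)) _ r := h1.mul h2
      convert this using 1
      simp only [hF_def, hn1]
      push_cast
      have : r ^ (m + 1) = r ^ m * r := pow_succ r m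
      simp only [Nat.add_sub_cancel, this]
      ring
    have hint : IntervalIntegrable (fun r : ℝ => r ^ (n - 1) * F (r * s))
        MeasureTheory.volume 0 1 := by
      apply Continuous.intervalIntegrable
      exact (continuous_pow _).mul (hF_cont.comp (continuous_id.mul continuous_const))
    have := intervalIntegral.integral_eq_sub_of_hasDerivAt hderiv hint
    rw [this]
    simp [hn1, zero_pow (Nat.succ_ne_zero m)]
  -- conclusion
  refine ⟨Gbar, hGbar_cont.continuousOn, fun θ _ => hGbar_pos θ, hGbar_eq,
    F, hF_cont.continuousOn, hF_mono.strictMonoOn _, hF0, ?_⟩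
  intro θ _
  have hIb : HasDerivAt (fun s => Ibar s + a * G a) (Gbar θ) θ :=
    (hIbar_deriv θ).add_const _
  apply hIb.congr_of_eventuallyEq
  filter_upwards with s using key s
end

section
/- Let G ∈ 𝒜(n), let 0 < c₁ < c₂ and 0 < a₁ < a₂, and assume G(c₁) ≥ a₁ and G(c₂) ≤ a₂. Then there exists ε₀ > 0 such that for every ε ∈ (0,ε₀) there is a function G_ε ∈ 𝒜(n) with: (i) G_ε(θ) = G(θ) for all θ ∈ [c₁+ε, c₂−ε], and G_ε(c₁) = a₁, G_ε(c₂) = a₂; (ii) the family (ε,θ) ↦ G_ε(θ) is uniformly bounded on (0,ε₀) × [c₁,c₂]. -/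
open Set

/-- The class `𝒜(n)`: continuous positive functions `G` on `(0,∞)` such that
`θ ↦ θG(θ) + nH(θ)` is strictly increasing for some antiderivative `H` of `G`. -/
def MemA (n : ℕ) (G : ℝ → ℝ) : Prop :=
  ContinuousOn G (Ioi 0) ∧ (∀ θ ∈ Ioi (0 : ℝ), 0 < G θ) ∧
    ∃ H : ℝ → ℝ, (∀ θ ∈ Ioi (0 : ℝ), HasDerivAt H (G θ) θ) ∧
      StrictMonoOn (fun θ => θ * G θ + n * H θ) (Ioi 0)

/-- Forward: membership in the class implies `θ^(n+1) G θ` is strictly increasing. -/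
theorem strictMono_of_memA (n : ℕ) (hn : 0 < n) (G : ℝ → ℝ) (hG : MemA n G) :
    StrictMonoOn (fun θ => θ ^ (n + 1) * G θ) (Ioi 0) := by
  obtain ⟨hc, hpos, H, hH, hM⟩ := hG
  set M : ℝ → ℝ := fun θ => θ * G θ + n * H θ with hMdef
  intro a ha b hb hab
  have ha0 : (0:ℝ) < a := ha
  have hb0 : (0:ℝ) < b := hb
  have hsub : Icc a b ⊆ Ioi 0 := fun x hx => lt_of_lt_of_le ha0 hx.1
  have huIcc : uIcc a b = Icc a b := uIcc_of_le hab.le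
  have hHc : ∀ x ∈ Icc a b, ContinuousWithinAt H (Icc a b) x := fun x hx =>
    (hH x (hsub hx)).continuousAt.continuousWithinAt
  have hMc : ContinuousOn M (Icc a b) := by
    apply ContinuousOn.add
    · exact continuousOn_id.mul (hc.mono hsub)
    · exact continuousOn_const.mul hHc
  have hint : IntervalIntegrable (fun θ => θ ^ (n-1) * M θ) MeasureTheory.volume a b := by
    apply ContinuousOn.intervalIntegrable
    rw [huIcc]
    exact (continuousOn_pow _).mul hMc
  -- FTC for ψ θ = θ^n * H θ
  have key : ∫ θ in a..b, θ ^ (n-1) * M θ = b ^ n * H b - a ^ n * H a := by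
    apply intervalIntegral.integral_eq_sub_of_hasDerivAt _ hint
    intro x hx
    rw [huIcc] at hx
    have hx0 : (0:ℝ) < x := hsub hx
    have h : HasDerivAt (fun θ => θ ^ n * H θ) (↑n * x ^ (n - 1) * H x + x ^ n * G x) x :=
      (hasDerivAt_pow n x).mul (hH x (hsub hx))
    refine h.congr_deriv ?_; symm
    have hxp : x ^ (n-1) * x = x ^ n := by
      rw [← pow_succ]; congr 1; omega
    show x ^ (n-1) * (x * G x + n * H x) = _
    rw [← hxp]; ring
  -- bound the integral
  have hint2 : IntervalIntegrable (fun θ => θ ^ (n-1) * M b) MeasureTheory.volume a b := by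
    apply ContinuousOn.intervalIntegrable
    exact (continuousOn_pow _).mul continuousOn_const
  have hbound : ∫ θ in a..b, θ ^ (n-1) * M θ ≤ ∫ θ in a..b, θ ^ (n-1) * M b := by
    apply intervalIntegral.integral_mono_on hab.le hint hint2
    intro x hx
    have hx0 : (0:ℝ) < x := hsub hx
    have : M x ≤ M b := hM.monotoneOn (hsub hx) hb hx.2
    nlinarith [pow_nonneg hx0.le (n-1)]
  have hval : ∫ θ in a..b, θ ^ (n-1) * M b = M b * ((b ^ n - a ^ n) / n) := by
    rw [intervalIntegral.integral_mul_const, integral_pow]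
    have h1 : n - 1 + 1 = n := by omega
    have h2 : (↑(n-1) : ℝ) + 1 = (n:ℝ) := by
      rw [Nat.cast_sub hn]; ring
    rw [h1, h2]; ring
  have hMab : M a < M b := hM ha hb hab
  have han : (0:ℝ) < a ^ n := pow_pos ha0 n
  have hnn : (0:ℝ) < n := Nat.cast_pos.mpr hn
  -- combine
  have e1 : b ^ (n+1) * G b - a ^ (n+1) * G a
      = b ^ n * M b - a ^ n * M a - n * (b ^ n * H b - a ^ n * H a) := by
    simp only [hMdef]; ring
  have step : (n:ℝ) * (∫ θ in a..b, θ ^ (n-1) * M θ) ≤ M b * (b ^ n - a ^ n) := by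
    calc (n:ℝ) * (∫ θ in a..b, θ ^ (n-1) * M θ)
        ≤ n * (M b * ((b ^ n - a ^ n) / n)) := by
          apply mul_le_mul_of_nonneg_left _ hnn.le
          rw [← hval]; exact hbound
      _ = M b * (b ^ n - a ^ n) := by field_simp
  rw [key] at step
  show a ^ (n+1) * G a < b ^ (n+1) * G b
  have e2 : M b * (b ^ n - a ^ n) = b ^ n * M b - a ^ n * M b := by ring
  have e4 : (0:ℝ) < a ^ n * (M b - M a) := mul_pos han (sub_pos.mpr hMab)
  have e3 : a ^ n * M b - a ^ n * M a = a ^ n * (M b - M a) := by ring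
  linarith [step, e1, e2, e3, e4]

/-- Reverse: if `θ^(n+1) G θ` is strictly increasing, `G` continuous positive, then `MemA`. -/
theorem memA_core (n : ℕ) (hn : 0 < n) (G : ℝ → ℝ)
    (hc : ContinuousOn G (Ioi 0)) (hpos : ∀ θ ∈ Ioi (0:ℝ), 0 < G θ)
    (hmono : StrictMonoOn (fun θ => θ ^ (n + 1) * G θ) (Ioi 0)) :
    MemA n G := by
  unfold MemA
  refine ⟨hc, hpos, fun θ => ∫ t in (1:ℝ)..θ, G t, ?_, ?_⟩
  · intro θ hθ
    have hθ0 : (0:ℝ) < θ := hθ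
    have hsub : uIcc 1 θ ⊆ Ioi 0 := fun x hx => lt_of_lt_of_le (lt_min one_pos hθ0) hx.1
    have hint : IntervalIntegrable G MeasureTheory.volume 1 θ :=
      (hc.mono hsub).intervalIntegrable
    exact intervalIntegral.integral_hasDerivAt_right hint
      (hc.stronglyMeasurableAtFilter isOpen_Ioi θ hθ)
      (hc.continuousAt (isOpen_Ioi.mem_nhds hθ))
  · intro a ha b hb hab
    have ha0 : (0:ℝ) < a := ha
    have hb0 : (0:ℝ) < b := hb
    have hsub : ∀ c : ℝ, 0 < c → uIcc 1 c ⊆ Ioi 0 :=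
      fun c hc0 x hx => lt_of_lt_of_le (lt_min one_pos hc0) hx.1
    have hintb : IntervalIntegrable G MeasureTheory.volume 1 b :=
      (hc.mono (hsub b hb0)).intervalIntegrable
    have hinta : IntervalIntegrable G MeasureTheory.volume 1 a :=
      (hc.mono (hsub a ha0)).intervalIntegrable
    have hsubab : Icc a b ⊆ Ioi 0 := fun x hx => lt_of_lt_of_le ha0 hx.1
    have hdiff : (∫ t in (1:ℝ)..b, G t) - (∫ t in (1:ℝ)..a, G t) = ∫ t in a..b, G t :=
      intervalIntegral.integral_interval_sub_left hintb hinta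
    set Ka : ℝ := a ^ (n+1) * G a with hKa
    have hKapos : 0 < Ka := mul_pos (pow_pos ha0 _) (hpos a ha)
    -- FTC for the comparison integrand
    have hφ : ∀ x ∈ uIcc a b, HasDerivAt (fun θ : ℝ => -(Ka / n) * (θ ^ n)⁻¹)
        (Ka / x ^ (n+1)) x := by
      intro x hx
      rw [uIcc_of_le hab.le] at hx
      have hx0 : (0:ℝ) < x := hsubab hx
      have h : HasDerivAt (fun θ : ℝ => -(Ka / n) * (θ ^ n)⁻¹) _ x :=
        ((hasDerivAt_pow n x).inv (pow_ne_zero n hx0.ne')).const_mul (-(Ka / n))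
      convert h using 1
      have h2 : (x ^ n) ^ 2 = x ^ (n+1) * x ^ (n-1) := by
        rw [← pow_mul, ← pow_add]; congr 1; omega
      have hnn : ((n:ℝ)) ≠ 0 := Nat.cast_ne_zero.mpr hn.ne'
      rw [h2]
      field_simp
    have hcont2 : ContinuousOn (fun θ : ℝ => Ka / θ ^ (n+1)) (Icc a b) := by
      apply ContinuousOn.div continuousOn_const (continuousOn_pow _)
      exact fun x hx => pow_ne_zero _ (hsubab hx).ne'
    have hint2 : IntervalIntegrable (fun θ : ℝ => Ka / θ ^ (n+1)) MeasureTheory.volume a b := by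
      apply ContinuousOn.intervalIntegrable
      rwa [uIcc_of_le hab.le]
    have hφval : ∫ θ in a..b, Ka / θ ^ (n+1)
        = -(Ka / n) * (b ^ n)⁻¹ - -(Ka / n) * (a ^ n)⁻¹ :=
      intervalIntegral.integral_eq_sub_of_hasDerivAt hφ hint2
    -- pointwise bound
    have hintG : IntervalIntegrable G MeasureTheory.volume a b :=
      (hc.mono (fun x hx => hsubab ((uIcc_of_le hab.le) ▸ hx))).intervalIntegrable
    have hGbound : ∫ θ in a..b, Ka / θ ^ (n+1) ≤ ∫ θ in a..b, G θ := by
      apply intervalIntegral.integral_mono_on hab.le hint2 hintG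
      intro x hx
      have hx0 : (0:ℝ) < x := hsubab hx
      have hKx : Ka ≤ x ^ (n+1) * G x := by
        rcases eq_or_lt_of_le hx.1 with h | h
        · rw [hKa, h]
        · exact (hmono ha (hsubab hx) h).le
      rw [div_le_iff₀ (pow_pos hx0 _)]
      nlinarith
    -- final computation
    show a * G a + n * (∫ t in (1:ℝ)..a, G t) < b * G b + n * (∫ t in (1:ℝ)..b, G t)
    have hnn : (0:ℝ) < (n:ℝ) := Nat.cast_pos.mpr hn
    have hbn : (0:ℝ) < b ^ n := pow_pos hb0 n
    have han : (0:ℝ) < a ^ n := pow_pos ha0 n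
    have e1 : b * G b = (b ^ (n+1) * G b) / b ^ n := by
      rw [pow_succ]; field_simp
    have e2 : a * G a = Ka / a ^ n := by
      rw [hKa, pow_succ]; field_simp
    have e3 : (n:ℝ) * (∫ θ in a..b, Ka / θ ^ (n+1)) = Ka / a ^ n - Ka / b ^ n := by
      rw [hφval]; field_simp; ring
    have e4 : Ka / b ^ n < (b ^ (n+1) * G b) / b ^ n :=
      (div_lt_div_iff_of_pos_right hbn).mpr (hmono ha hb hab)
    have e5 : (n:ℝ) * ((∫ t in (1:ℝ)..b, G t) - (∫ t in (1:ℝ)..a, G t))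
        = n * ∫ t in a..b, G t := by rw [hdiff]
    have e6 : (n:ℝ) * (∫ θ in a..b, Ka / θ ^ (n+1)) ≤ n * ∫ θ in a..b, G θ :=
      mul_le_mul_of_nonneg_left hGbound hnn.le
    linarith [e1, e2, e3, e4, e5, e6]

/-- Auxiliary piecewise modification of `θ ↦ θ^(n+1) G θ`. -/
noncomputable def Kaux (n : ℕ) (G : ℝ → ℝ) (c₁ c₂ b₁ b₂ ε θ : ℝ) : ℝ :=
  if c₁ ≤ θ then
    if c₁ + ε ≤ θ then
      if θ ≤ c₂ - ε then (min (max θ c₁) c₂) ^ (n + 1) * G (min (max θ c₁) c₂)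
      else if θ ≤ c₂ then
        (c₂ - ε) ^ (n + 1) * G (c₂ - ε)
          + (b₂ - (c₂ - ε) ^ (n + 1) * G (c₂ - ε)) * ((θ - (c₂ - ε)) / ε)
      else b₂ * (θ / c₂)
    else b₁ + ((c₁ + ε) ^ (n + 1) * G (c₁ + ε) - b₁) * ((θ - c₁) / ε)
  else b₁ * (θ / c₁)

variable {n : ℕ} {G : ℝ → ℝ} {c₁ c₂ b₁ b₂ ε θ : ℝ}

theorem Kaux_lt1 (h : θ < c₁) : Kaux n G c₁ c₂ b₁ b₂ ε θ = b₁ * (θ / c₁) := by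
  unfold Kaux; rw [if_neg (not_le.mpr h)]

theorem Kaux_b2 (h1 : c₁ ≤ θ) (h2 : θ < c₁ + ε) :
    Kaux n G c₁ c₂ b₁ b₂ ε θ = b₁ + ((c₁ + ε) ^ (n + 1) * G (c₁ + ε) - b₁) * ((θ - c₁) / ε) := by
  unfold Kaux; rw [if_pos h1, if_neg (not_le.mpr h2)]

theorem Kaux_mid (hε : 0 ≤ ε) (h1 : c₁ + ε ≤ θ) (h2 : θ ≤ c₂ - ε) :
    Kaux n G c₁ c₂ b₁ b₂ ε θ = θ ^ (n + 1) * G θ := by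
  have hc₁θ : c₁ ≤ θ := by linarith
  have hθc₂ : θ ≤ c₂ := by linarith
  unfold Kaux
  rw [if_pos hc₁θ, if_pos h1, if_pos h2, max_eq_left hc₁θ, min_eq_left hθc₂]

theorem Kaux_b4 (hε : 0 < ε) (hcc : c₁ + ε ≤ c₂ - ε) (h1 : c₂ - ε < θ) (h2 : θ ≤ c₂) :
    Kaux n G c₁ c₂ b₁ b₂ ε θ = (c₂ - ε) ^ (n + 1) * G (c₂ - ε)
      + (b₂ - (c₂ - ε) ^ (n + 1) * G (c₂ - ε)) * ((θ - (c₂ - ε)) / ε) := by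
  have hc₁θ : c₁ ≤ θ := by linarith
  have h1' : c₁ + ε ≤ θ := by linarith
  unfold Kaux
  rw [if_pos hc₁θ, if_pos h1', if_neg (not_le.mpr h1), if_pos h2]

theorem Kaux_b5 (hε : 0 < ε) (hcc : c₁ + ε ≤ c₂ - ε) (h : c₂ < θ) :
    Kaux n G c₁ c₂ b₁ b₂ ε θ = b₂ * (θ / c₂) := by
  have hc₁θ : c₁ ≤ θ := by linarith
  have h1' : c₁ + ε ≤ θ := by linarith
  have h2' : ¬ θ ≤ c₂ - ε := by push_neg; linarith
  unfold Kaux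
  rw [if_pos hc₁θ, if_pos h1', if_neg h2', if_neg (not_le.mpr h)]

theorem Kaux_continuous (hc₁ : 0 < c₁) (hcl : c₁ < c₂) (hG : ContinuousOn G (Ioi 0))
    (hε0 : 0 < ε) (hε : c₁ + ε < c₂ - ε) :
    Continuous (fun θ => Kaux n G c₁ c₂ b₁ b₂ ε θ) := by
  have hc₂ : (0:ℝ) < c₂ := hc₁.trans hcl
  have hclamp : Continuous fun θ : ℝ => min (max θ c₁) c₂ :=
    (continuous_id.max continuous_const).min continuous_const
  have hmem : ∀ x : ℝ, min (max x c₁) c₂ ∈ Ioi (0:ℝ) := fun x =>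
    lt_of_lt_of_le hc₁ (le_min (le_max_right _ _) hcl.le)
  have hKc : Continuous fun θ : ℝ => (min (max θ c₁) c₂) ^ (n + 1) * G (min (max θ c₁) c₂) :=
    (hclamp.pow _).mul (hG.comp_continuous hclamp hmem)
  have hlin1 : Continuous fun θ : ℝ => b₁ * (θ / c₁) := by fun_prop
  have hlin2 : Continuous fun θ : ℝ =>
      b₁ + ((c₁ + ε) ^ (n + 1) * G (c₁ + ε) - b₁) * ((θ - c₁) / ε) := by fun_prop
  have hlin4 : Continuous fun θ : ℝ => (c₂ - ε) ^ (n + 1) * G (c₂ - ε)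
      + (b₂ - (c₂ - ε) ^ (n + 1) * G (c₂ - ε)) * ((θ - (c₂ - ε)) / ε) := by fun_prop
  have hlin5 : Continuous fun θ : ℝ => b₂ * (θ / c₂) := by fun_prop
  have hin1 : Continuous fun θ : ℝ => if θ ≤ c₂ then
      (c₂ - ε) ^ (n + 1) * G (c₂ - ε)
        + (b₂ - (c₂ - ε) ^ (n + 1) * G (c₂ - ε)) * ((θ - (c₂ - ε)) / ε)
      else b₂ * (θ / c₂) := by
    apply Continuous.if_le hlin4 hlin5 continuous_id continuous_const
    intro x hx
    simp only [id_eq] at hx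
    rw [hx]
    rw [show c₂ - (c₂ - ε) = ε by ring, div_self hε0.ne', div_self hc₂.ne']
    ring
  have hin2 : Continuous fun θ : ℝ => if θ ≤ c₂ - ε then
      (min (max θ c₁) c₂) ^ (n + 1) * G (min (max θ c₁) c₂)
      else if θ ≤ c₂ then
        (c₂ - ε) ^ (n + 1) * G (c₂ - ε)
          + (b₂ - (c₂ - ε) ^ (n + 1) * G (c₂ - ε)) * ((θ - (c₂ - ε)) / ε)
      else b₂ * (θ / c₂) := by
    apply Continuous.if_le hKc hin1 continuous_id continuous_const
    intro x hx
    simp only [id_eq] at hx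
    rw [hx]
    have h1 : c₁ ≤ c₂ - ε := by linarith
    have h2 : c₂ - ε ≤ c₂ := by linarith
    rw [max_eq_left h1, min_eq_left h2, if_pos h2]
    simp
  have hin3 : Continuous fun θ : ℝ => if c₁ + ε ≤ θ then
      (if θ ≤ c₂ - ε then (min (max θ c₁) c₂) ^ (n + 1) * G (min (max θ c₁) c₂)
      else if θ ≤ c₂ then
        (c₂ - ε) ^ (n + 1) * G (c₂ - ε)
          + (b₂ - (c₂ - ε) ^ (n + 1) * G (c₂ - ε)) * ((θ - (c₂ - ε)) / ε)
      else b₂ * (θ / c₂))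
      else b₁ + ((c₁ + ε) ^ (n + 1) * G (c₁ + ε) - b₁) * ((θ - c₁) / ε) := by
    apply Continuous.if_le hin2 hlin2 continuous_const continuous_id
    intro x hx
    simp only [id_eq] at hx
    rw [← hx]
    have h1 : c₁ ≤ c₁ + ε := by linarith
    have h2 : c₁ + ε ≤ c₂ := by linarith
    rw [if_pos hε.le, max_eq_left h1, min_eq_left h2,
      show c₁ + ε - c₁ = ε by ring, div_self hε0.ne']
    ring
  unfold Kaux
  apply Continuous.if_le hin3 hlin1 continuous_const continuous_id
  intro x hx
  simp only [id_eq] at hx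
  rw [← hx]
  rw [if_neg (by push_neg; linarith), show c₁ - c₁ = 0 by ring, zero_div, div_self hc₁.ne']
  ring

/-- gluing/modification lemma for the class `𝒜(n)`: one can modify
`G ∈ 𝒜(n)` near `c₁` and `c₂` so as to prescribe the values `a₁`, `a₂` there, keeping
`G` unchanged on `[c₁+ε, c₂−ε]`, with the family uniformly bounded. -/
theorem modify_A_class (n : ℕ) (hn : 0 < n) (G : ℝ → ℝ) (hG : MemA n G)
    (c₁ c₂ a₁ a₂ : ℝ) (hc₁ : 0 < c₁) (hc : c₁ < c₂) (ha₁ : 0 < a₁) (ha : a₁ < a₂)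
    (h1 : a₁ ≤ G c₁) (h2 : G c₂ ≤ a₂) :
    ∃ ε₀ > (0 : ℝ), ∃ Gf : ℝ → ℝ → ℝ,
      (∀ ε ∈ Ioo (0 : ℝ) ε₀,
        MemA n (Gf ε) ∧ (∀ θ ∈ Icc (c₁ + ε) (c₂ - ε), Gf ε θ = G θ) ∧
        Gf ε c₁ = a₁ ∧ Gf ε c₂ = a₂) ∧
      ∃ M : ℝ, ∀ ε ∈ Ioo (0 : ℝ) ε₀, ∀ θ ∈ Icc c₁ c₂, |Gf ε θ| ≤ M := by
  have hc₂ : (0:ℝ) < c₂ := hc₁.trans hc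
  have hc₁I : c₁ ∈ Ioi (0:ℝ) := hc₁
  have hc₂I : c₂ ∈ Ioi (0:ℝ) := hc₂
  have hK : StrictMonoOn (fun θ => θ ^ (n + 1) * G θ) (Ioi 0) := strictMono_of_memA n hn G hG
  obtain ⟨hGc, hGpos, -⟩ := hG
  set b₁ : ℝ := c₁ ^ (n + 1) * a₁ with hb₁def
  set b₂ : ℝ := c₂ ^ (n + 1) * a₂ with hb₂def
  have hb₁pos : 0 < b₁ := mul_pos (pow_pos hc₁ _) ha₁
  have hb₂pos : 0 < b₂ := mul_pos (pow_pos hc₂ _) (ha₁.trans ha)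
  have hb₁K : b₁ ≤ c₁ ^ (n + 1) * G c₁ :=
    mul_le_mul_of_nonneg_left h1 (pow_nonneg hc₁.le _)
  have hKb₂ : c₂ ^ (n + 1) * G c₂ ≤ b₂ :=
    mul_le_mul_of_nonneg_left h2 (pow_nonneg hc₂.le _)
  -- master facts for each ε
  have master : ∀ ε ∈ Ioo (0:ℝ) ((c₂ - c₁)/2),
      StrictMonoOn (fun θ => Kaux n G c₁ c₂ b₁ b₂ ε θ) (Ioi 0) ∧
      (∀ θ ∈ Ioi (0:ℝ), 0 < Kaux n G c₁ c₂ b₁ b₂ ε θ) ∧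
      Kaux n G c₁ c₂ b₁ b₂ ε c₁ = b₁ ∧ Kaux n G c₁ c₂ b₁ b₂ ε c₂ = b₂ ∧
      (∀ θ ∈ Icc (c₁ + ε) (c₂ - ε), Kaux n G c₁ c₂ b₁ b₂ ε θ = θ ^ (n + 1) * G θ) ∧
      Continuous (fun θ => Kaux n G c₁ c₂ b₁ b₂ ε θ) := by
    rintro ε ⟨hε0, hεu⟩
    have h12 : c₁ + ε < c₂ - ε := by linarith
    have hc₁ε : c₁ < c₁ + ε := by linarith
    have hc₁ε0 : (0:ℝ) < c₁ + ε := by linarith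
    have hc₂ε0 : (0:ℝ) < c₂ - ε := by linarith
    have hc₂ε : c₂ - ε < c₂ := by linarith
    set k1 : ℝ := (c₁ + ε) ^ (n + 1) * G (c₁ + ε) with hk1def
    set k2 : ℝ := (c₂ - ε) ^ (n + 1) * G (c₂ - ε) with hk2def
    have hk1 : b₁ < k1 := lt_of_le_of_lt hb₁K (hK hc₁I (by exact hc₁ε0) hc₁ε)
    have hk2 : k2 < b₂ := lt_of_lt_of_le (hK (by exact hc₂ε0) hc₂I hc₂ε) hKb₂
    have hk2pos : 0 < k2 := mul_pos (pow_pos hc₂ε0 _) (hGpos _ hc₂ε0)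
    -- piece values
    have v1 : ∀ θ ∈ Ioc (0:ℝ) c₁, Kaux n G c₁ c₂ b₁ b₂ ε θ = b₁ * (θ / c₁) := by
      intro θ hθ
      rcases lt_or_eq_of_le hθ.2 with h | h
      · exact Kaux_lt1 h
      · rw [h, Kaux_b2 le_rfl hc₁ε, div_self hc₁.ne']
        simp
    have v2 : ∀ θ ∈ Icc c₁ (c₁ + ε),
        Kaux n G c₁ c₂ b₁ b₂ ε θ = b₁ + (k1 - b₁) * ((θ - c₁) / ε) := by
      intro θ hθ
      rcases lt_or_eq_of_le hθ.2 with h | h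
      · exact Kaux_b2 hθ.1 h
      · rw [h, Kaux_mid hε0.le le_rfl h12.le,
          show c₁ + ε - c₁ = ε by ring, div_self hε0.ne', ← hk1def]
        ring
    have v3 : ∀ θ ∈ Icc (c₁ + ε) (c₂ - ε),
        Kaux n G c₁ c₂ b₁ b₂ ε θ = θ ^ (n + 1) * G θ :=
      fun θ hθ => Kaux_mid hε0.le hθ.1 hθ.2
    have v4 : ∀ θ ∈ Icc (c₂ - ε) c₂,
        Kaux n G c₁ c₂ b₁ b₂ ε θ = k2 + (b₂ - k2) * ((θ - (c₂ - ε)) / ε) := by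
      intro θ hθ
      rcases eq_or_lt_of_le hθ.1 with h | h
      · rw [← h, Kaux_mid hε0.le h12.le le_rfl, ← hk2def]
        simp
      · rw [Kaux_b4 hε0 h12.le h hθ.2, ← hk2def]
    have v5 : ∀ θ ∈ Ici c₂, Kaux n G c₁ c₂ b₁ b₂ ε θ = b₂ * (θ / c₂) := by
      intro θ hθ
      rcases eq_or_lt_of_le (show c₂ ≤ θ from hθ) with h | h
      · rw [← h, Kaux_b4 hε0 h12.le hc₂ε le_rfl, ← hk2def,
          show c₂ - (c₂ - ε) = ε by ring, div_self hε0.ne', div_self hc₂.ne']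
        ring
      · exact Kaux_b5 hε0 h12.le h
    -- piece monotonicity
    have p1 : StrictMonoOn (fun θ => Kaux n G c₁ c₂ b₁ b₂ ε θ) (Ioc 0 c₁) := by
      intro x hx y hy hxy
      simp only [v1 x hx, v1 y hy]
      exact mul_lt_mul_of_pos_left (div_lt_div_of_pos_right hxy hc₁) hb₁pos
    have p2 : StrictMonoOn (fun θ => Kaux n G c₁ c₂ b₁ b₂ ε θ) (Icc c₁ (c₁ + ε)) := by
      intro x hx y hy hxy
      simp only [v2 x hx, v2 y hy]
      have : (x - c₁) / ε < (y - c₁) / ε :=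
        div_lt_div_of_pos_right (by linarith) hε0
      nlinarith [hk1]
    have p3 : StrictMonoOn (fun θ => Kaux n G c₁ c₂ b₁ b₂ ε θ) (Icc (c₁ + ε) (c₂ - ε)) := by
      intro x hx y hy hxy
      simp only [v3 x hx, v3 y hy]
      exact hK (by simp only [mem_Ioi]; linarith [hx.1]) (by simp only [mem_Ioi]; linarith [hy.1]) hxy
    have p4 : StrictMonoOn (fun θ => Kaux n G c₁ c₂ b₁ b₂ ε θ) (Icc (c₂ - ε) c₂) := by
      intro x hx y hy hxy
      simp only [v4 x hx, v4 y hy]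
      have : (x - (c₂ - ε)) / ε < (y - (c₂ - ε)) / ε :=
        div_lt_div_of_pos_right (by linarith) hε0
      nlinarith [hk2]
    have p5 : StrictMonoOn (fun θ => Kaux n G c₁ c₂ b₁ b₂ ε θ) (Ici c₂) := by
      intro x hx y hy hxy
      simp only [v5 x hx, v5 y hy]
      exact mul_lt_mul_of_pos_left (div_lt_div_of_pos_right hxy hc₂) hb₂pos
    -- glue
    have u1 : StrictMonoOn (fun θ => Kaux n G c₁ c₂ b₁ b₂ ε θ) (Ioc 0 (c₁ + ε)) := by
      have := p1.union p2 (isGreatest_Ioc hc₁) (isLeast_Icc hc₁ε.le)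
      rwa [Ioc_union_Icc_eq_Ioc hc₁ hc₁ε.le] at this
    have u2 : StrictMonoOn (fun θ => Kaux n G c₁ c₂ b₁ b₂ ε θ) (Ioc 0 (c₂ - ε)) := by
      have := u1.union p3 (isGreatest_Ioc hc₁ε0) (isLeast_Icc h12.le)
      rwa [Ioc_union_Icc_eq_Ioc hc₁ε0 h12.le] at this
    have u3 : StrictMonoOn (fun θ => Kaux n G c₁ c₂ b₁ b₂ ε θ) (Ioc 0 c₂) := by
      have := u2.union p4 (isGreatest_Ioc hc₂ε0) (isLeast_Icc hc₂ε.le)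
      rwa [Ioc_union_Icc_eq_Ioc hc₂ε0 hc₂ε.le] at this
    have umono : StrictMonoOn (fun θ => Kaux n G c₁ c₂ b₁ b₂ ε θ) (Ioi 0) := by
      have := u3.union p5 (isGreatest_Ioc hc₂) isLeast_Ici
      rwa [Ioc_union_Ici_eq_Ioi hc₂] at this
    have hvc₁ : Kaux n G c₁ c₂ b₁ b₂ ε c₁ = b₁ := by
      rw [v2 c₁ (by constructor <;> linarith)]
      simp
    have hvc₂ : Kaux n G c₁ c₂ b₁ b₂ ε c₂ = b₂ := by
      rw [v5 c₂ self_mem_Ici, div_self hc₂.ne', mul_one]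
    refine ⟨umono, ?_, hvc₁, hvc₂, v3, Kaux_continuous hc₁ hc hGc hε0 h12⟩
    intro θ hθ
    rcases le_or_gt c₁ θ with h | h
    · have := umono.monotoneOn hc₁I hθ h
      calc (0:ℝ) < b₁ := hb₁pos
        _ = Kaux n G c₁ c₂ b₁ b₂ ε c₁ := hvc₁.symm
        _ ≤ Kaux n G c₁ c₂ b₁ b₂ ε θ := this
    · rw [Kaux_lt1 h]
      have hθ0 : (0:ℝ) < θ := hθ
      positivity
  -- conclude
  refine ⟨(c₂ - c₁)/2, by linarith, fun ε θ => Kaux n G c₁ c₂ b₁ b₂ ε θ / θ ^ (n + 1), ?_, ?_⟩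
  · intro ε hε
    obtain ⟨umono, upos, hvc₁, hvc₂, v3, ucont⟩ := master ε hε
    obtain ⟨hε0', hεu'⟩ := hε
    refine ⟨?_, ?_, ?_, ?_⟩
    · apply memA_core n hn
      · exact (ucont.continuousOn).div (continuousOn_pow _)
          (fun x hx => pow_ne_zero _ (ne_of_gt hx))
      · exact fun θ hθ => div_pos (upos θ hθ) (pow_pos hθ _)
      · intro x hx y hy hxy
        show x ^ (n+1) * (Kaux n G c₁ c₂ b₁ b₂ ε x / x ^ (n+1))
          < y ^ (n+1) * (Kaux n G c₁ c₂ b₁ b₂ ε y / y ^ (n+1))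
        rw [mul_comm, div_mul_cancel₀ _ (pow_ne_zero _ (ne_of_gt (show (0:ℝ) < x from hx))),
          mul_comm, div_mul_cancel₀ _ (pow_ne_zero _ (ne_of_gt (show (0:ℝ) < y from hy)))]
        exact umono hx hy hxy
    · intro θ hθ
      have hθ0 : (0:ℝ) < θ := by linarith [hθ.1]
      show Kaux n G c₁ c₂ b₁ b₂ ε θ / θ ^ (n + 1) = G θ
      rw [v3 θ hθ, mul_comm, mul_div_assoc, div_self (pow_ne_zero _ hθ0.ne'), mul_one]
    · show Kaux n G c₁ c₂ b₁ b₂ ε c₁ / c₁ ^ (n + 1) = a₁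
      rw [hvc₁, hb₁def, mul_comm, mul_div_assoc, div_self (pow_ne_zero _ hc₁.ne'), mul_one]
    · show Kaux n G c₁ c₂ b₁ b₂ ε c₂ / c₂ ^ (n + 1) = a₂
      rw [hvc₂, hb₂def, mul_comm, mul_div_assoc, div_self (pow_ne_zero _ hc₂.ne'), mul_one]
  · refine ⟨b₂ / c₁ ^ (n + 1), ?_⟩
    intro ε hε θ hθ
    obtain ⟨umono, upos, hvc₁, hvc₂, v3, ucont⟩ := master ε hε
    have hθ0 : (0:ℝ) < θ := lt_of_lt_of_le hc₁ hθ.1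
    have hθI : θ ∈ Ioi (0:ℝ) := hθ0
    have hub : Kaux n G c₁ c₂ b₁ b₂ ε θ ≤ b₂ := by
      have h := umono.monotoneOn hθI hc₂I hθ.2
      rwa [hvc₂] at h
    have hpos : 0 < Kaux n G c₁ c₂ b₁ b₂ ε θ / θ ^ (n + 1) :=
      div_pos (upos θ hθI) (pow_pos hθ0 _)
    show |Kaux n G c₁ c₂ b₁ b₂ ε θ / θ ^ (n + 1)| ≤ b₂ / c₁ ^ (n + 1)
    rw [abs_of_pos hpos]
    exact div_le_div₀ hb₂pos.le hub (pow_pos hc₁ _) (pow_le_pow_left₀ hc₁.le hθ.1 _)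
end

section
/- Let L be a convex body in ℝⁿ containing the origin in its interior, let e be a unit vector, and let {L_t}, t ∈ [-1,1], be the Steiner shadow system of L along e. Assume that the function t ↦ V((L_t)°)^{-1} is convex on [-1,1] (Meyer–Reisner), that V((L_t)*) ≤ V((L_t)°) with equality characterizing the Santaló point, and that V((L_0)*) ≥ V((L_1)*). If the barycentre of L° is the origin, then V(L°) ≤ V((L_t)°) for all t ∈ [-1,1]. -/
open Set MeasureTheory

noncomputable def pol {n : ℕ} (M : Set (EuclideanSpace ℝ (Fin n))) :
    Set (EuclideanSpace ℝ (Fin n)) :=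
  {x | ∀ y ∈ M, (inner ℝ x y : ℝ) ≤ 1}

noncomputable def vol {n : ℕ} (M : Set (EuclideanSpace ℝ (Fin n))) : ℝ :=
  (volume M).toReal

section helpers

variable {n : ℕ}

lemma isClosed_pol (M : Set (EuclideanSpace ℝ (Fin n))) : IsClosed (pol M) := by
  have h : pol M = ⋂ y ∈ M, {x : EuclideanSpace ℝ (Fin n) | (inner ℝ x y : ℝ) ≤ 1} := by
    ext x; simp [pol]
  rw [h]
  exact isClosed_biInter fun y _ =>
    isClosed_le (Continuous.inner continuous_id continuous_const) continuous_const

lemma pol_subset_closedBall (M : Set (EuclideanSpace ℝ (Fin n))) {r : ℝ} (hr : 0 < r)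
    (h : Metric.closedBall 0 r ⊆ M) :
    pol M ⊆ Metric.closedBall (0 : EuclideanSpace ℝ (Fin n)) r⁻¹ := by
  intro x hx
  rw [Metric.mem_closedBall, dist_zero_right]
  by_cases hx0 : x = 0
  · simp [hx0]; positivity
  · have hnx : 0 < ‖x‖ := norm_pos_iff.mpr hx0
    have hy : (r / ‖x‖) • x ∈ M := by
      apply h
      rw [Metric.mem_closedBall, dist_zero_right, norm_smul]
      rw [Real.norm_eq_abs, abs_of_pos (by positivity)]
      rw [div_mul_cancel₀ _ hnx.ne']
    have h1 := hx _ hy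
    rw [real_inner_smul_right, real_inner_self_eq_norm_sq] at h1
    have h2 : r * ‖x‖ ≤ 1 := by
      have he : r / ‖x‖ * ‖x‖ ^ 2 = r * ‖x‖ := by field_simp
      linarith [he ▸ h1]
    have h3 : r * r⁻¹ = 1 := mul_inv_cancel₀ hr.ne'
    nlinarith [inv_pos.mpr hr]

lemma closedBall_subset_pol (M : Set (EuclideanSpace ℝ (Fin n))) {R : ℝ} (hR : 0 < R)
    (h : M ⊆ Metric.closedBall 0 R) :
    Metric.closedBall (0 : EuclideanSpace ℝ (Fin n)) R⁻¹ ⊆ pol M := by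
  intro x hx y hy
  rw [Metric.mem_closedBall, dist_zero_right] at hx
  have hy' : ‖y‖ ≤ R := by
    have := h hy; rwa [Metric.mem_closedBall, dist_zero_right] at this
  calc (inner ℝ x y : ℝ) ≤ ‖x‖ * ‖y‖ := real_inner_le_norm x y
    _ ≤ R⁻¹ * R := mul_le_mul hx hy' (norm_nonneg _) (by positivity)
    _ = 1 := inv_mul_cancel₀ hR.ne'

lemma vol_pol_pos {M : Set (EuclideanSpace ℝ (Fin n))} {r R : ℝ} (hr : 0 < r) (hR : 0 < R)
    (h1 : Metric.closedBall 0 r ⊆ M) (h2 : M ⊆ Metric.closedBall 0 R) :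
    0 < vol (pol M) := by
  apply ENNReal.toReal_pos
  · intro h0
    have hle := measure_mono (μ := volume) (closedBall_subset_pol M hR h2)
    rw [h0] at hle
    have hpos := Metric.measure_closedBall_pos (volume : Measure (EuclideanSpace ℝ (Fin n))) 0
      (inv_pos.mpr hR)
    exact hpos.ne' (le_antisymm hle zero_le)
  · have hle := measure_mono (μ := volume) (pol_subset_closedBall M hr h1)
    exact (lt_of_le_of_lt hle measure_closedBall_lt_top).ne

noncomputable def reflIso (e : EuclideanSpace ℝ (Fin n)) (he : ‖e‖ = 1) :
    EuclideanSpace ℝ (Fin n) ≃ₗᵢ[ℝ] EuclideanSpace ℝ (Fin n) := by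
  have hee : (inner ℝ e e : ℝ) = 1 := by
    rw [real_inner_self_eq_norm_mul_norm, he]; norm_num
  refine LinearEquiv.isometryOfInner
    (LinearEquiv.ofInvolutive
      { toFun := fun x => x - (2 * (inner ℝ x e : ℝ)) • e
        map_add' := by
          intro x y
          simp only [inner_add_left]
          module
        map_smul' := by
          intro c x
          simp only [real_inner_smul_left, RingHom.id_apply]
          module }
      (fun x => by
        simp only [LinearMap.coe_mk, AddHom.coe_mk, inner_sub_left, real_inner_smul_left, hee]
        module)) ?_
  intro x y
  simp only [LinearEquiv.ofInvolutive, LinearEquiv.coe_mk, LinearMap.coe_mk, AddHom.coe_mk,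
    inner_sub_left, inner_sub_right, real_inner_smul_left, real_inner_smul_right, hee]
  rw [real_inner_comm e y]
  ring

lemma reflIso_apply (e : EuclideanSpace ℝ (Fin n)) (he : ‖e‖ = 1)
    (x : EuclideanSpace ℝ (Fin n)) :
    reflIso e he x = x - (2 * (inner ℝ x e : ℝ)) • e := rfl

end helpers


set_option maxHeartbeats 2000000 in
/-- for the Steiner shadow system `L_t` of a convex body `L` with the origin
interior, assuming the Meyer–Reisner convexity of `t ↦ V((L_t)°)⁻¹`, that
`V((L_t)*) ≤ V((L_t)°)` with equality when the barycentre of `(L_t)°` is the origin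
(characterization of the Santaló point), and `V((L_0)*) ≥ V((L_1)*)`: if the barycentre
of `L°` is the origin, then `V(L°) ≤ V((L_t)°)` for all `t ∈ [-1,1]`. -/
theorem polar_volume_ge_along_steiner_of_barycentre {n : ℕ}
    (e : EuclideanSpace ℝ (Fin n)) (he : ‖e‖ = 1)
    (L : Set (EuclideanSpace ℝ (Fin n)))
    (hcomp : IsCompact L) (hconv : Convex ℝ L)
    (h0 : (0 : EuclideanSpace ℝ (Fin n)) ∈ interior L)
    (P : Set (EuclideanSpace ℝ (Fin n)))
    (hP : P = (fun x => x - (inner ℝ x e : ℝ) • e) '' L)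
    (z w u : EuclideanSpace ℝ (Fin n) → ℝ)
    (hz : ConvexOn ℝ P z) (hw : ConcaveOn ℝ P w) (hzw : ∀ x ∈ P, z x ≤ w x)
    (hu : ∀ x, u x = (z x + w x) / 2)
    (Lt : ℝ → Set (EuclideanSpace ℝ (Fin n)))
    (hLt : ∀ t : ℝ, Lt t =
      {x : EuclideanSpace ℝ (Fin n) | (x - (inner ℝ x e : ℝ) • e) ∈ P ∧
        z (x - (inner ℝ x e : ℝ) • e) - (1 - t) * u (x - (inner ℝ x e : ℝ) • e) ≤ (inner ℝ x e : ℝ) ∧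
        (inner ℝ x e : ℝ) ≤ w (x - (inner ℝ x e : ℝ) • e) - (1 - t) * u (x - (inner ℝ x e : ℝ) • e)})
    (hL1 : Lt 1 = L)
    -- Meyer–Reisner convexity of the inverse polar volume along the shadow system
    (hMR : ConvexOn ℝ (Icc (-1 : ℝ) 1) (fun t => (vol (pol (Lt t)))⁻¹))
    -- the volumes `sV t = V((L_t)*)` of the polars with respect to the Santaló point
    (sV : ℝ → ℝ)
    (hsV_le : ∀ t ∈ Icc (-1 : ℝ) 1, sV t ≤ vol (pol (Lt t)))
    (hsV_eq : ∀ t ∈ Icc (-1 : ℝ) 1,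
      (∫ x in pol (Lt t), x ∂volume) = 0 → sV t = vol (pol (Lt t)))
    (hsV01 : sV 1 ≤ sV 0)
    -- barycentre of `L°` at the origin
    (hbar : (∫ x in pol L, x ∂volume) = 0) :
    ∀ t ∈ Icc (-1 : ℝ) 1, vol (pol L) ≤ vol (pol (Lt t)) := by
  have hee : (inner ℝ e e : ℝ) = 1 := by
    rw [real_inner_self_eq_norm_mul_norm, he]; norm_num
  -- inner of elements of P with e vanishes
  have hPe : ∀ y ∈ P, (inner ℝ y e : ℝ) = 0 := by
    intro y hy
    rw [hP] at hy
    obtain ⟨x, _, rfl⟩ := hy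
    show (inner ℝ (x - (inner ℝ x e : ℝ) • e) e : ℝ) = 0
    rw [inner_sub_left, real_inner_smul_left, hee]
    ring
  -- membership criterion
  have hmem : ∀ (t' : ℝ) (y : EuclideanSpace ℝ (Fin n)), (inner ℝ y e : ℝ) = 0 → ∀ s : ℝ,
      (y + s • e ∈ Lt t' ↔
        y ∈ P ∧ z y - (1 - t') * u y ≤ s ∧ s ≤ w y - (1 - t') * u y) := by
    intro t' y hy s
    have h1 : (inner ℝ (y + s • e) e : ℝ) = s := by
      rw [inner_add_left, real_inner_smul_left, hee, hy]; ring
    have h2 : y + s • e - s • e = y := add_sub_cancel_right y (s • e)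
    rw [hLt t']
    simp only [mem_setOf_eq, h1, h2]
  -- norm decomposition
  have hnorm : ∀ (y : EuclideanSpace ℝ (Fin n)) (s : ℝ), (inner ℝ y e : ℝ) = 0 →
      ‖y + s • e‖ ^ 2 = ‖y‖ ^ 2 + s ^ 2 := by
    intro y s hy
    rw [norm_add_sq_real, real_inner_smul_right, hy, norm_smul]
    simp [he, mul_pow, sq_abs]
  -- outer radius
  obtain ⟨r0, hr0⟩ := hcomp.isBounded.subset_closedBall 0
  set R := max r0 1 with hRdef
  have hRpos : (0 : ℝ) < R := lt_of_lt_of_le one_pos (le_max_right _ _)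
  have hLR : L ⊆ Metric.closedBall 0 R :=
    hr0.trans (Metric.closedBall_subset_closedBall (le_max_left _ _))
  -- the graph points lie in L
  have hzwP : ∀ y ∈ P, y + z y • e ∈ L ∧ y + w y • e ∈ L := by
    intro y hy
    constructor
    · rw [← hL1, hmem 1 y (hPe y hy)]
      exact ⟨hy, by linarith, by linarith [hzw y hy]⟩
    · rw [← hL1, hmem 1 y (hPe y hy)]
      exact ⟨hy, by linarith [hzw y hy], by linarith⟩
  -- bounds on z, w, y over P
  have hbounds : ∀ y ∈ P, ‖y‖ ≤ R ∧ |z y| ≤ R ∧ |w y| ≤ R := by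
    intro y hy
    obtain ⟨hz1, hw1⟩ := hzwP y hy
    have h1 : ‖y + z y • e‖ ≤ R := by
      have := hLR hz1; rwa [Metric.mem_closedBall, dist_zero_right] at this
    have h2 : ‖y + w y • e‖ ≤ R := by
      have := hLR hw1; rwa [Metric.mem_closedBall, dist_zero_right] at this
    have e1 := hnorm y (z y) (hPe y hy)
    have e2 := hnorm y (w y) (hPe y hy)
    have hn : (0 : ℝ) ≤ ‖y‖ := norm_nonneg y
    have hn1 : (0 : ℝ) ≤ ‖y + z y • e‖ := norm_nonneg _
    have hn2 : (0 : ℝ) ≤ ‖y + w y • e‖ := norm_nonneg _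
    have q1 : ‖y‖ ^ 2 + z y ^ 2 ≤ R ^ 2 := by nlinarith
    have q2 : ‖y‖ ^ 2 + w y ^ 2 ≤ R ^ 2 := by nlinarith
    refine ⟨by nlinarith, abs_le.mpr ⟨by nlinarith, by nlinarith⟩,
      abs_le.mpr ⟨by nlinarith, by nlinarith⟩⟩
  -- outer inclusion
  have houter : ∀ t ∈ Icc (-1 : ℝ) 1, Lt t ⊆ Metric.closedBall 0 (4 * R) := by
    intro t ht x hx
    rw [hLt t] at hx
    obtain ⟨hyP, hl, hr⟩ := hx
    set s := (inner ℝ x e : ℝ) with hs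
    set y := x - s • e with hy
    have hye : (inner ℝ y e : ℝ) = 0 := hPe y hyP
    obtain ⟨hy1, hz1, hw1⟩ := hbounds y hyP
    have hu1 : |u y| ≤ R := by
      rw [hu, abs_le]; rw [abs_le] at hz1 hw1
      constructor <;> [linarith [hz1.1, hw1.1]; linarith [hz1.2, hw1.2]]
    rw [abs_le] at hz1 hw1 hu1
    have h1t : (0:ℝ) ≤ 1 - t := by linarith [ht.2]
    have h2t : 1 - t ≤ 2 := by linarith [ht.1]
    have hub : (1 - t) * u y ≤ 2 * R := by
      nlinarith [mul_le_mul_of_nonneg_left hu1.2 h1t, hRpos]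
    have hlb : -(2 * R) ≤ (1 - t) * u y := by
      nlinarith [mul_le_mul_of_nonneg_left hu1.1 h1t, hRpos]
    have hsb : |s| ≤ 3 * R := abs_le.mpr ⟨by linarith [hz1.1], by linarith [hw1.2]⟩
    have hxy : x = y + s • e := by rw [hy]; exact (sub_add_cancel x (s • e)).symm
    rw [Metric.mem_closedBall, dist_zero_right, hxy]
    have hq := hnorm y s hye
    have := norm_nonneg (y + s • e)
    rw [abs_le] at hsb
    nlinarith [norm_nonneg y]
  -- inner radius
  obtain ⟨ε0, hε0, hballL⟩ := Metric.mem_nhds_iff.mp (mem_interior_iff_mem_nhds.mp h0)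
  set ε := ε0 / 2 with hεdef
  have hε : (0 : ℝ) < ε := by positivity
  have hεL : Metric.closedBall 0 ε ⊆ L :=
    (Metric.closedBall_subset_ball (by simp [hεdef]; linarith)).trans hballL
  -- z,w bounds near the origin
  have hnear : ∀ y ∈ P, ‖y‖ ≤ ε / 2 → z y ≤ -(ε / 2) ∧ ε / 2 ≤ w y := by
    intro y hy hyn
    have hye := hPe y hy
    have hmem1 : ∀ s : ℝ, |s| ≤ ε / 2 → y + s • e ∈ L := by
      intro s hsb
      apply hεL
      rw [Metric.mem_closedBall, dist_zero_right]
      have hq := hnorm y s hye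
      have := norm_nonneg (y + s • e)
      rw [abs_le] at hsb
      nlinarith [norm_nonneg y]
    constructor
    · have h1 : y + (-(ε/2)) • e ∈ Lt 1 := hL1 ▸ hmem1 (-(ε/2)) (by rw [abs_le]; constructor <;> linarith)
      have := ((hmem 1 y hye (-(ε/2))).mp h1).2.1
      linarith
    · have h1 : y + (ε/2) • e ∈ Lt 1 := hL1 ▸ hmem1 (ε/2) (by rw [abs_le]; constructor <;> linarith)
      have := ((hmem 1 y hye (ε/2)).mp h1).2.2
      linarith
  -- inner inclusion
  have hinner : ∀ t ∈ Icc (-1 : ℝ) 1, Metric.closedBall 0 (ε / 2) ⊆ Lt t := by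
    intro t ht x hx
    rw [Metric.mem_closedBall, dist_zero_right] at hx
    set s := (inner ℝ x e : ℝ) with hs
    set y := x - s • e with hy
    have hye : (inner ℝ y e : ℝ) = 0 := by
      rw [hy, inner_sub_left, real_inner_smul_left, hee, hs]; ring
    have hxy : x = y + s • e := by rw [hy]; exact (sub_add_cancel x (s • e)).symm
    have hsb : |s| ≤ ε / 2 := by
      have := abs_real_inner_le_norm x e
      rw [he, mul_one] at this
      exact le_trans this hx
    have hyn : ‖y‖ ≤ ε / 2 := by
      have hq := hnorm y s hye
      rw [← hxy] at hq
      nlinarith [norm_nonneg y, norm_nonneg x, sq_abs s]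
    have hyL : y ∈ L := hεL (by rw [Metric.mem_closedBall, dist_zero_right]; linarith)
    have hyP : y ∈ P := by
      rw [hP]
      refine ⟨y, hyL, ?_⟩
      show y - (inner ℝ y e : ℝ) • e = y
      rw [hye]; simp
    obtain ⟨hz2, hw2⟩ := hnear y hyP hyn
    rw [hxy, hmem t y hye s]
    refine ⟨hyP, ?_, ?_⟩ <;> rw [hu] <;> rw [abs_le] at hsb
    · nlinarith [mul_nonneg (by linarith [ht.1] : (0:ℝ) ≤ 1 + t) (by linarith : (0:ℝ) ≤ -(ε/2) - z y),
        mul_nonneg (by linarith [ht.2] : (0:ℝ) ≤ 1 - t) (by linarith : (0:ℝ) ≤ w y - ε/2)]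
    · nlinarith [mul_nonneg (by linarith [ht.1] : (0:ℝ) ≤ 1 + t) (by linarith : (0:ℝ) ≤ w y - ε/2),
        mul_nonneg (by linarith [ht.2] : (0:ℝ) ≤ 1 - t) (by linarith : (0:ℝ) ≤ -(ε/2) - z y)]
  -- positivity of polar volumes
  have hpos : ∀ t ∈ Icc (-1 : ℝ) 1, 0 < vol (pol (Lt t)) := by
    intro t ht
    exact vol_pol_pos (by positivity) (by positivity) (hinner t ht) (houter t ht)
  -- reflection
  set Rf := reflIso e he with hRf
  have hRfa : ∀ x, Rf x = x - (2 * (inner ℝ x e : ℝ)) • e := fun x => reflIso_apply e he x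
  have hRfinv : ∀ x, Rf (Rf x) = x := by
    intro x
    rw [hRfa (Rf x), hRfa x]
    rw [inner_sub_left, real_inner_smul_left, hee]
    module
  -- Lt (-1) is the reflection preimage of L
  have hLtneg : Lt (-1) = Rf ⁻¹' L := by
    ext x
    set s := (inner ℝ x e : ℝ) with hs
    set y := x - s • e with hy
    have hxy : x = y + s • e := by rw [hy]; exact (sub_add_cancel x (s • e)).symm
    have hye : (inner ℝ y e : ℝ) = 0 := by
      rw [hy, inner_sub_left, real_inner_smul_left, hee, hs]; ring
    have hRfx : Rf x = y + (-s) • e := by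
      rw [hRfa x, hy, hs]
      module
    constructor
    · intro hx
      rw [hxy, hmem (-1) y hye s] at hx
      obtain ⟨hyP, h1, h2⟩ := hx
      rw [mem_preimage, hRfx, ← hL1, hmem 1 y hye (-s)]
      rw [hu] at h1 h2
      exact ⟨hyP, by linarith, by linarith⟩
    · intro hx
      rw [mem_preimage, hRfx, ← hL1, hmem 1 y hye (-s)] at hx
      obtain ⟨hyP, h1, h2⟩ := hx
      rw [hxy, hmem (-1) y hye s]
      refine ⟨hyP, ?_, ?_⟩ <;> rw [hu] <;> linarith
  -- polar of reflection preimage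
  have hpolneg : pol (Lt (-1)) = Rf ⁻¹' (pol L) := by
    rw [hLtneg]
    ext x
    simp only [pol, mem_setOf_eq, mem_preimage]
    constructor
    · intro h y' hy'
      have h1 : Rf (Rf y') ∈ L := by rw [hRfinv]; exact hy'
      have h2 := h (Rf y') h1
      rwa [← Rf.inner_map_map x (Rf y'), hRfinv] at h2
    · intro h y' hy'
      have h2 := h (Rf y') hy'
      rwa [Rf.inner_map_map] at h2
  -- equal volumes at the endpoints
  have hveq : vol (pol (Lt (-1))) = vol (pol L) := by
    unfold vol
    rw [hpolneg, Rf.measurePreserving.measure_preimage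
      (isClosed_pol L).measurableSet.nullMeasurableSet]
  -- conclude by convexity
  intro t ht
  have hm1 : (-1 : ℝ) ∈ Icc (-1 : ℝ) 1 := by constructor <;> norm_num
  have h1m : (1 : ℝ) ∈ Icc (-1 : ℝ) 1 := by constructor <;> norm_num
  have hcvx := hMR.2 hm1 h1m (show (0:ℝ) ≤ (1 - t) / 2 by linarith [ht.2])
    (show (0:ℝ) ≤ (1 + t) / 2 by linarith [ht.1])
    (show (1 - t) / 2 + (1 + t) / 2 = 1 by ring)
  simp only [smul_eq_mul] at hcvx
  have harg : (1 - t) / 2 * (-1 : ℝ) + (1 + t) / 2 * 1 = t := by ring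
  rw [harg] at hcvx
  have hL1v : vol (pol (Lt 1)) = vol (pol L) := by rw [hL1]
  rw [hveq, hL1v] at hcvx
  have hcvx2 : (vol (pol (Lt t)))⁻¹ ≤ (vol (pol L))⁻¹ := by
    calc (vol (pol (Lt t)))⁻¹ ≤ (1 - t) / 2 * (vol (pol L))⁻¹ + (1 + t) / 2 * (vol (pol L))⁻¹ :=
          hcvx
      _ = (vol (pol L))⁻¹ := by ring
  have hp1 : 0 < vol (pol L) := hL1v ▸ hpos 1 h1m
  have hpt : 0 < vol (pol (Lt t)) := hpos t ht
  exact (inv_le_inv₀ hpt hp1).mp hcvx2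
end
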